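/- Vertical independence: let φ : X → Y, g : X → Z, h : Y → Z be s-fibrations between compact ergodic gluing cubespaces with g = h ∘ φ, where φ is vertical. Then for any u ∈ Aut₁(g) and any x, x' ∈ X with φ(x) = φ(x'), one has φ(u(x)) = φ(u(x')). -/

import Mathlib

open Function Set

/-- The all-ones vertex `1⃗` of the discrete cube `{0,1}^k`. -/
def topVtx (k : ℕ) : Fin k → Bool := fun _ => true

/-- A family of cube sets on a space `X`: for each `k`, a set of `k`-configurations. -/
structure CubeFamily (X : Type*) where
  cubes : ∀ k : ℕ, Set ((Fin k → Bool) → X)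

/-- A morphism of discrete cubes: each coordinate function is constantly `0`,
constantly `1`, a coordinate `ω i`, or a negated coordinate `!ω i`. -/
def IsDiscreteCubeMorphism {k l : ℕ} (ρ : (Fin k → Bool) → (Fin l → Bool)) : Prop :=
  ∀ j : Fin l, (∀ ω, ρ ω j = false) ∨ (∀ ω, ρ ω j = true) ∨
    (∃ i : Fin k, ∀ ω, ρ ω j = ω i) ∨ (∃ i : Fin k, ∀ ω, ρ ω j = !(ω i))

/-- The cubespace axioms: cube sets are closed, `C^0(X) = X`, and cubes are stable
under precomposition with morphisms of discrete cubes. -/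
def CubeFamily.IsCubespace {X : Type*} [TopologicalSpace X] (S : CubeFamily X) : Prop :=
  (∀ k, IsClosed (S.cubes k)) ∧ S.cubes 0 = Set.univ ∧
    ∀ {k l : ℕ} (ρ : (Fin k → Bool) → (Fin l → Bool)), IsDiscreteCubeMorphism ρ →
      ∀ c ∈ S.cubes l, (fun ω => c (ρ ω)) ∈ S.cubes k

/-- A cubespace morphism: a continuous map sending cubes to cubes. -/
def IsMorphism {X Y : Type*} [TopologicalSpace X] [TopologicalSpace Y]
    (S : CubeFamily X) (T : CubeFamily Y) (f : X → Y) : Prop :=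
  Continuous f ∧ ∀ k, ∀ c ∈ S.cubes k, (fun ω => f (c ω)) ∈ T.cubes k

/-- `lam` is a `k`-corner: each lower face `{ω : ω i = 0}` restricts to a `(k-1)`-cube.
(The restriction of `lam` to the face `{ω : ω i = 0}` is a `(k-1)`-cube iff the
degenerate configuration `ω ↦ lam (update ω i false)` is a `k`-cube, by the
discrete-cube-morphism axiom; the value of `lam` at `topVtx k` is irrelevant here.) -/
def IsCubeCorner {X : Type*} (S : CubeFamily X) {k : ℕ} (lam : (Fin k → Bool) → X) : Prop :=
  ∀ i : Fin k, (fun ω => lam (Function.update ω i false)) ∈ S.cubes k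

/-- Relative `k`-completion for `f : X → Y`: every `k`-corner in `X` whose `f`-image
extends to a `k`-cube `c` of `Y` can be completed to a `k`-cube of `X` lying over `c`. -/
def HasCompletionAt {X Y : Type*} (S : CubeFamily X) (T : CubeFamily Y) (f : X → Y)
    (k : ℕ) : Prop :=
  ∀ (lam : (Fin k → Bool) → X) (c : (Fin k → Bool) → Y), IsCubeCorner S lam → c ∈ T.cubes k →
    (∀ ω, ω ≠ topVtx k → f (lam ω) = c ω) →
    ∃ c₀ ∈ S.cubes k, (∀ ω, ω ≠ topVtx k → c₀ ω = lam ω) ∧ (fun ω => f (c₀ ω)) = c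

/-- A fibration: a cubespace morphism with `k`-completion for all `k ≥ 0`. -/
def IsFibration {X Y : Type*} [TopologicalSpace X] [TopologicalSpace Y]
    (S : CubeFamily X) (T : CubeFamily Y) (f : X → Y) : Prop :=
  IsMorphism S T f ∧ ∀ k, HasCompletionAt S T f k

/-- Relative `k`-uniqueness: two `k`-cubes agreeing off the top vertex with equal
`f`-images are equal. -/
def HasUniquenessAt {X Y : Type*} (S : CubeFamily X) (T : CubeFamily Y) (f : X → Y)
    (k : ℕ) : Prop :=
  ∀ c ∈ S.cubes k, ∀ c' ∈ S.cubes k, (∀ ω, ω ≠ topVtx k → c ω = c' ω) →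
    (fun ω => f (c ω)) = (fun ω => f (c' ω)) → c = c'

/-- An `s`-fibration: a fibration with `(s+1)`-uniqueness. -/
def IsSFibration {X Y : Type*} [TopologicalSpace X] [TopologicalSpace Y]
    (S : CubeFamily X) (T : CubeFamily Y) (f : X → Y) (s : ℕ) : Prop :=
  IsFibration S T f ∧ HasUniquenessAt S T f (s + 1)

/-- Absolute fibrancy: every `k`-corner completes to a `k`-cube. -/
def IsFibrant {X : Type*} (S : CubeFamily X) : Prop :=
  ∀ (k : ℕ) (lam : (Fin k → Bool) → X), IsCubeCorner S lam →
    ∃ c₀ ∈ S.cubes k, ∀ ω, ω ≠ topVtx k → c₀ ω = lam ω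

/-- Absolute `k`-uniqueness. -/
def HasUnique {X : Type*} (S : CubeFamily X) (k : ℕ) : Prop :=
  ∀ c ∈ S.cubes k, ∀ c' ∈ S.cubes k, (∀ ω, ω ≠ topVtx k → c ω = c' ω) → c = c'

/-- Ergodicity: every pair of points is a `1`-cube. -/
def IsErgodic {X : Type*} (S : CubeFamily X) : Prop := S.cubes 1 = Set.univ

/-- Concatenation `[c₁, c₂]` of two `k`-configurations along the last coordinate. -/
def concatCube {X : Type*} {k : ℕ} (c₁ c₂ : (Fin k → Bool) → X) :
    (Fin (k + 1) → Bool) → X :=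
  fun ω => if ω (Fin.last k) = true then c₂ (fun i => ω i.castSucc)
           else c₁ (fun i => ω i.castSucc)

/-- The gluing property. -/
def IsGluing {X : Type*} (S : CubeFamily X) : Prop :=
  ∀ (k : ℕ) (c₁ c₂ c₃ : (Fin k → Bool) → X), c₁ ∈ S.cubes k → c₂ ∈ S.cubes k →
    c₃ ∈ S.cubes k → concatCube c₁ c₂ ∈ S.cubes (k + 1) →
    concatCube c₂ c₃ ∈ S.cubes (k + 1) → concatCube c₁ c₃ ∈ S.cubes (k + 1)

/-- The `s`-th canonical relation `x ∼ₛ x'`. -/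
def CanonRel {X : Type*} (S : CubeFamily X) (s : ℕ) (x x' : X) : Prop :=
  ∃ c ∈ S.cubes (s + 1), ∃ c' ∈ S.cubes (s + 1),
    (∀ ω, ω ≠ topVtx (s + 1) → c ω = c' ω) ∧ c (topVtx (s + 1)) = x ∧ c' (topVtx (s + 1)) = x'

/-- The `s`-th canonical relation relative to `f` : `x ∼_{f,s} x'`. -/
def RelCanonRel {X Y : Type*} (S : CubeFamily X) (f : X → Y) (s : ℕ) (x x' : X) : Prop :=
  CanonRel S s x x' ∧ f x = f x'

/-- `F ⊆ {0,1}^n` is a face of codimension `k`: obtained by fixing the values of `k`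
coordinates. -/
def IsFaceOfCodim {n : ℕ} (F : Set (Fin n → Bool)) (k : ℕ) : Prop :=
  ∃ (I : Finset (Fin n)) (b : Fin n → Bool), I.card = k ∧ F = {ω | ∀ i ∈ I, ω i = b i}

open Classical in
/-- Modify the configuration `c` by applying `φ` on the face `F`. -/
noncomputable def faceModify {X : Type*} {n : ℕ} (F : Set (Fin n → Bool)) (φ : X → X)
    (c : (Fin n → Bool) → X) : (Fin n → Bool) → X :=
  fun ω => if ω ∈ F then φ (c ω) else c ω

/-- `φ` is a `k`-translation of the cubespace `S`: a cubespace automorphism such that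
modifying any `n`-cube (`n ≥ k`) by `φ` along any codimension-`k` face yields a cube. -/
def IsTranslationOf {X : Type*} (S : CubeFamily X) (φ : X → X) (k : ℕ) : Prop :=
  (∀ (n : ℕ) (c : (Fin n → Bool) → X), c ∈ S.cubes n ↔ (fun ω => φ (c ω)) ∈ S.cubes n) ∧
  ∀ (n : ℕ), k ≤ n → ∀ F : Set (Fin n → Bool), IsFaceOfCodim F k →
    ∀ c ∈ S.cubes n, faceModify F φ c ∈ S.cubes n

/-- The subcubespace on a subset `A ⊆ X`: cubes of `X` taking values in `A`. -/
def subFamily {X : Type*} (S : CubeFamily X) (A : Set X) : CubeFamily X :=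
  ⟨fun k => {c | c ∈ S.cubes k ∧ ∀ ω, c ω ∈ A}⟩

/-- `u` belongs to the `k`-th translation group `Aut_k(g)` of a map `g : X → Z`: it is
a homeomorphism of `X` fixing the fibers of `g` and restricting to a `k`-translation of
each subcubespace `g⁻¹(z)`. -/
def MemAut {X Z : Type*} [TopologicalSpace X] (S : CubeFamily X) (g : X → Z)
    (u : X → X) (k : ℕ) : Prop :=
  IsHomeomorph u ∧ (∀ x, g (u x) = g x) ∧
    ∀ z : Z, IsTranslationOf (subFamily S (g ⁻¹' {z})) u k


section Aux

open scoped Classical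

variable {X : Type*} [TopologicalSpace X] {S : CubeFamily X}

lemma comp_cube_mem (hS : S.IsCubespace) {k l : ℕ} (ρ : (Fin k → Bool) → (Fin l → Bool))
    (hρ : IsDiscreteCubeMorphism ρ) {c : (Fin l → Bool) → X} (hc : c ∈ S.cubes l) :
    (fun ω => c (ρ ω)) ∈ S.cubes k := hS.2.2 ρ hρ c hc

lemma const_cube_mem (hS : S.IsCubespace) (y : X) (k : ℕ) :
    (fun _ : Fin k → Bool => y) ∈ S.cubes k := by
  have h0 : (fun _ : Fin 0 → Bool => y) ∈ S.cubes 0 := by rw [hS.2.1]; trivial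
  exact hS.2.2 (fun _ (i : Fin 0) => true) (fun j => j.elim0) _ h0

lemma eq_top_of_last_castSucc {k : ℕ} {ω : Fin (k+1) → Bool} (h1 : ω (Fin.last k) = true)
    (h2 : (fun i : Fin k => ω i.castSucc) = topVtx k) : ω = topVtx (k+1) := by
  funext i
  cases i using Fin.lastCases with
  | last => exact h1
  | cast i => exact congrFun h2 i

lemma corner_cube_mem (hS : S.IsCubespace) (hgl : IsGluing S) {n : ℕ}
    {w w' : (Fin (n + 1) → Bool) → X}
    (hw : w ∈ S.cubes (n + 1)) (hw' : w' ∈ S.cubes (n + 1))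
    (hag : ∀ ω, ω ≠ topVtx (n + 1) → w ω = w' ω) :
    (fun ω => if ω = topVtx (n + 1) then w' (topVtx (n + 1)) else w (topVtx (n + 1)))
      ∈ S.cubes (n + 1) := by
  set G : ℕ → ((Fin (n + 1) → Bool) → X) := fun j ω =>
    if ω = topVtx (n + 1) then w' (topVtx (n + 1))
    else w (fun i => if (i : ℕ) < j then ω i else true) with hG
  have hbase : G (n + 1) ∈ S.cubes (n + 1) := by
    have hGw : G (n + 1) = w' := by
      funext ω
      by_cases hω : ω = topVtx (n + 1)
      · simp [hG, hω]
      · have h1 : (fun i : Fin (n+1) => if (i : ℕ) < n + 1 then ω i else true) = ω := by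
          funext i; simp [i.isLt]
        simp only [hG, if_neg hω, h1, hag ω hω]
    rw [hGw]; exact hw'
  have hstep : ∀ j : ℕ, j < n + 1 → G (j + 1) ∈ S.cubes (n + 1) → G j ∈ S.cubes (n + 1) := by
    intro j hj hGj
    set jf : Fin (n + 1) := ⟨j, hj⟩ with hjf
    set L : Fin (n + 1) := Fin.last n with hLdef
    set e : Equiv.Perm (Fin (n + 1)) := Equiv.swap jf L with he
    have hejf : e jf = L := Equiv.swap_apply_left _ _
    have heL : e L = jf := Equiv.swap_apply_right _ _
    have hee : ∀ k, e (e k) = k := fun k => Equiv.swap_apply_self _ _ _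
    have hjn : j ≤ n := by omega
    have helt : ∀ i : Fin (n + 1), (i : ℕ) < j → e i = i := by
      intro i hi
      refine Equiv.swap_apply_of_ne_of_ne ?_ ?_
      · intro hii
        have : (i : ℕ) = j := by rw [hii]
        omega
      · intro hii
        have : (i : ℕ) = n := by rw [hii, hLdef]; rfl
        omega
    have heLval : ∀ k : Fin (n+1), ¬ ((e k : ℕ) < n) → e k = L := by
      intro k hk
      have := (e k).isLt
      exact Fin.ext (by simp [hLdef]; omega)
    have htope : ∀ ω : Fin (n + 1) → Bool,
        ((fun k => ω (e k)) = topVtx (n + 1)) ↔ ω = topVtx (n + 1) := by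
      intro ω
      constructor
      · intro hh
        funext k
        have h2 := congrFun hh (e.symm k)
        simpa [topVtx] using h2
      · intro hh; subst hh; rfl
    -- the three auxiliary (n)-configurations
    set A' : (Fin n → Bool) → X := fun η =>
      w (fun i => if h : (i : ℕ) < j then η ⟨i, by omega⟩ else true) with hA'
    set A : (Fin n → Bool) → X := fun η =>
      w (fun i => if h : (i : ℕ) < j then η ⟨i, by omega⟩
        else if (i : ℕ) = j then false else true) with hA
    set B : (Fin n → Bool) → X := fun η =>
      G (j + 1) (fun k => if h : (e k : ℕ) < n then η ⟨e k, h⟩ else true) with hB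
    have hA'mem : A' ∈ S.cubes n := by
      rw [hA']
      refine hS.2.2 (fun η (i : Fin (n+1)) =>
        if h : (i : ℕ) < j then η ⟨i, by omega⟩ else true) ?_ w hw
      intro i
      by_cases h : (i : ℕ) < j
      · exact Or.inr (Or.inr (Or.inl ⟨⟨i, by omega⟩, fun η => by simp [h]⟩))
      · exact Or.inr (Or.inl (fun η => by simp [h]))
    have hAmem : A ∈ S.cubes n := by
      rw [hA]
      refine hS.2.2 (fun η (i : Fin (n+1)) =>
        if h : (i : ℕ) < j then η ⟨i, by omega⟩
        else if (i : ℕ) = j then false else true) ?_ w hw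
      intro i
      by_cases h : (i : ℕ) < j
      · exact Or.inr (Or.inr (Or.inl ⟨⟨i, by omega⟩, fun η => by simp [h]⟩))
      · by_cases h2 : (i : ℕ) = j
        · exact Or.inl (fun η => by simp [h, h2])
        · exact Or.inr (Or.inl (fun η => by simp [h, h2]))
    have hBmem : B ∈ S.cubes n := by
      rw [hB]
      refine hS.2.2 (fun η (k : Fin (n+1)) =>
        if h : (e k : ℕ) < n then η ⟨e k, h⟩ else true) ?_ _ hGj
      intro k
      by_cases h : (e k : ℕ) < n
      · exact Or.inr (Or.inr (Or.inl ⟨⟨e k, h⟩, fun η => by simp [h]⟩))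
      · exact Or.inr (Or.inl (fun η => by simp [h]))
    have hcs : ∀ (ω : Fin (n+1) → Bool) (i : ℕ) (h' : i < n) (h'' : i < n + 1),
        ω (Fin.castSucc ⟨i, h'⟩) = ω ⟨i, h''⟩ := by
      intro ω i h' h''
      congr 1
    -- E1 : [A', A] is the w-image of a morphism
    have hE1 : concatCube A' A = fun ω =>
        w (fun i => if (i : ℕ) < j then ω i else if (i : ℕ) = j then !(ω L) else true) := by
      funext ω
      simp only [concatCube, hA, hA']
      by_cases hb : ω (Fin.last n) = true
      · rw [if_pos hb]
        congr 1
        funext i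
        by_cases h : (i : ℕ) < j
        · rw [dif_pos h, if_pos h]
          exact congrArg ω (Fin.ext rfl)
        · rw [dif_neg h, if_neg h]
          by_cases h2 : (i : ℕ) = j
          · simp [h2, ← hLdef, hb]
            rw [hLdef]; exact hb
          · simp [h2]
      · rw [if_neg hb]
        congr 1
        funext i
        by_cases h : (i : ℕ) < j
        · rw [dif_pos h, if_pos h]
          exact congrArg ω (Fin.ext rfl)
        · rw [dif_neg h, if_neg h]
          by_cases h2 : (i : ℕ) = j
          · have hb' : ω L = false := by
              rw [hLdef]; exact Bool.eq_false_iff.mpr (fun hc => hb hc)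
            simp [h2, hb']
          · simp [h2]
    have hE1mem : concatCube A' A ∈ S.cubes (n + 1) := by
      rw [hE1]
      refine hS.2.2 (fun ω (i : Fin (n+1)) =>
        if (i : ℕ) < j then ω i else if (i : ℕ) = j then !(ω L) else true) ?_ w hw
      intro i
      by_cases h : (i : ℕ) < j
      · exact Or.inr (Or.inr (Or.inl ⟨i, fun ω => by simp [h]⟩))
      · by_cases h2 : (i : ℕ) = j
        · exact Or.inr (Or.inr (Or.inr ⟨L, fun ω => by simp [h, h2]⟩))
        · exact Or.inr (Or.inl (fun ω => by simp [h, h2]))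
    -- E2 : [A, B] = G (j+1) ∘ e
    have hE2 : concatCube A B = fun ω => G (j + 1) (fun k => ω (e k)) := by
      funext ω
      simp only [concatCube, hA, hB]
      by_cases hb : ω (Fin.last n) = true
      · rw [if_pos hb]
        congr 1
        funext k
        by_cases h : (e k : ℕ) < n
        · rw [dif_pos h]
          exact congrArg ω (Fin.ext rfl)
        · rw [dif_neg h, heLval k h, hLdef]
          exact hb.symm
      · rw [if_neg hb]
        have hnt : ¬ ((fun k => ω (e k)) = topVtx (n + 1)) := by
          intro hc
          have h3 := congrFun hc jf
          rw [hejf] at h3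
          exact hb h3
        simp only [hG]
        rw [if_neg hnt]
        congr 1
        funext i
        by_cases h : (i : ℕ) < j
        · rw [dif_pos h, if_pos (by omega : (i : ℕ) < j + 1), helt i h]
          exact congrArg ω (Fin.ext rfl)
        · rw [dif_neg h]
          by_cases h2 : (i : ℕ) = j
          · have hij : i = jf := Fin.ext h2
            rw [if_pos h2, if_pos (by omega : (i : ℕ) < j + 1), hij, hejf]
            exact (Bool.eq_false_iff.mpr (fun hc => hb hc)).symm
          · rw [if_neg h2, if_neg (by omega : ¬ ((i : ℕ) < j + 1))]
    have hE2mem : concatCube A B ∈ S.cubes (n + 1) := by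
      rw [hE2]
      exact hS.2.2 (fun ω k => ω (e k))
        (fun k => Or.inr (Or.inr (Or.inl ⟨e k, fun ω => rfl⟩))) _ hGj
    -- gluing
    have hglued : concatCube A' B ∈ S.cubes (n + 1) :=
      hgl n A' A B hA'mem hAmem hBmem hE1mem hE2mem
    -- E3 : [A', B] = G j ∘ e
    have hE3 : concatCube A' B = fun ω => G j (fun k => ω (e k)) := by
      funext ω
      simp only [concatCube, hA', hB]
      by_cases hb : ω (Fin.last n) = true
      · rw [if_pos hb]
        have hkey : (fun k => if h : (e k : ℕ) < n then
            (fun i : Fin n => ω i.castSucc) ⟨e k, h⟩ else true) = fun k => ω (e k) := by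
          funext k
          by_cases h : (e k : ℕ) < n
          · rw [dif_pos h]
            exact congrArg ω (Fin.ext rfl)
          · rw [dif_neg h, heLval k h, hLdef]
            exact hb.symm
        rw [hkey]
        simp only [hG]
        by_cases hω : (fun k => ω (e k)) = topVtx (n + 1)
        · rw [if_pos hω, if_pos hω]
        · rw [if_neg hω, if_neg hω]
          congr 1
          funext i
          by_cases h : (i : ℕ) < j
          · rw [if_pos (by omega : (i : ℕ) < j + 1), if_pos h]
          · by_cases h2 : (i : ℕ) = j
            · have hij : i = jf := Fin.ext h2
              rw [if_pos (by omega : (i : ℕ) < j + 1), if_neg h, hij, hejf, hb]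
            · rw [if_neg (by omega : ¬ ((i : ℕ) < j + 1)), if_neg h]
      · rw [if_neg hb]
        have hnt : ¬ ((fun k => ω (e k)) = topVtx (n + 1)) := by
          intro hc
          have h3 := congrFun hc jf
          rw [hejf] at h3
          exact hb h3
        simp only [hG]
        rw [if_neg hnt]
        congr 1
        funext i
        by_cases h : (i : ℕ) < j
        · rw [dif_pos h, if_pos h, helt i h]
          exact congrArg ω (Fin.ext rfl)
        · rw [dif_neg h, if_neg h]
    -- transport back through the involution e
    have hback : (fun ω => (fun ω' => G j (fun k => ω' (e k))) (fun k => ω (e k)))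
        ∈ S.cubes (n + 1) := by
      refine hS.2.2 (fun ω k => ω (e k))
        (fun k => Or.inr (Or.inr (Or.inl ⟨e k, fun ω => rfl⟩)))
        (fun ω' => G j (fun k => ω' (e k))) ?_
      rw [← hE3]; exact hglued
    have hGj' : G j = fun ω => (fun ω' => G j (fun k => ω' (e k))) (fun k => ω (e k)) := by
      funext ω
      simp only []
      congr 1
      funext k
      rw [hee k]
    rw [hGj']
    exact hback
  have hall : ∀ t, t ≤ n + 1 → G (n + 1 - t) ∈ S.cubes (n + 1) := by
    intro t
    induction t with
    | zero => intro _; exact hbase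
    | succ t ih =>
      intro ht
      have h1 : n + 1 - t = (n + 1 - (t + 1)) + 1 := by omega
      have h2 : n + 1 - (t + 1) < n + 1 := by omega
      refine hstep _ h2 ?_
      rw [← h1]
      exact ih (by omega)
  have h0 := hall (n + 1) le_rfl
  simp only [Nat.sub_self] at h0
  have hG0 : G 0 = fun ω =>
      if ω = topVtx (n + 1) then w' (topVtx (n + 1)) else w (topVtx (n + 1)) := by
    funext ω
    by_cases hω : ω = topVtx (n + 1)
    · simp [hG, hω]
    · simp only [hG, if_neg hω]
      congr 1
  rwa [hG0] at h0

end Aux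

/-- vertical independence: let `φ : X → Y`, `g : X → Z`, `h : Y → Z` be
`s`-fibrations between compact ergodic gluing cubespaces with `g = h ∘ φ` and `φ`
vertical.  Then for any `u ∈ Aut₁(g)` and any `x, x'` with `φ(x) = φ(x')`, one has
`φ(u(x)) = φ(u(x'))`. -/
theorem vertical_independence {X Y Z : Type*}
    [MetricSpace X] [MetricSpace Y] [MetricSpace Z]
    [CompactSpace X] [CompactSpace Y] [CompactSpace Z]
    (S : CubeFamily X) (T : CubeFamily Y) (U : CubeFamily Z)
    (hS : S.IsCubespace) (hT : T.IsCubespace) (hU : U.IsCubespace)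
    (heS : IsErgodic S) (heT : IsErgodic T) (heU : IsErgodic U)
    (hgS : IsGluing S) (hgT : IsGluing T) (hgU : IsGluing U)
    (s : ℕ) (hs : 1 ≤ s)
    (φ : X → Y) (g : X → Z) (h : Y → Z)
    (hφ : IsSFibration S T φ s) (hg : IsSFibration S U g s) (hh : IsSFibration T U h s)
    (hcomp : ∀ x, g x = h (φ x))
    (hvert : ∀ x x' : X, RelCanonRel T h (s - 1) (φ x) (φ x') →
      RelCanonRel S g (s - 1) x x')
    (u : X → X) (hu : MemAut S g u 1) :
    ∀ x x' : X, φ x = φ x' → φ (u x) = φ (u x') := by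
  classical
  intro x x' hxx'
  obtain ⟨n, rfl⟩ : ∃ n, s = n + 1 := ⟨s - 1, (Nat.succ_pred_eq_of_pos hs).symm⟩
  simp only [Nat.add_sub_cancel] at hvert
  -- Step 1: verticality gives `x ∼_{g,n} x'`
  have hcan : RelCanonRel T h n (φ x) (φ x') :=
    ⟨⟨fun _ => φ x, const_cube_mem hT _ _, fun _ => φ x, const_cube_mem hT _ _,
      fun _ _ => rfl, rfl, hxx'⟩, by rw [hxx']⟩
  obtain ⟨⟨c, hc, c', hc', hagr, hctop, hc'top⟩, hgxx'⟩ := hvert x x' hcan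
  -- Step 2: the corner configuration `⌞(x, x')` is a cube
  have hd0 := corner_cube_mem hS hgS hc hc' hagr
  rw [hctop, hc'top] at hd0
  set d : (Fin (n + 1) → Bool) → X := fun ω => if ω = topVtx (n + 1) then x' else x with hd
  have hdmem : d ∈ S.cubes (n + 1) := hd0
  have hdz : ∀ η, g (d η) = g x := by
    intro η
    by_cases hη : η = topVtx (n + 1)
    · simp only [hd]; rw [if_pos hη]; exact hgxx'.symm
    · simp only [hd]; rw [if_neg hη]
  have hdfib : ∀ η, d η ∈ g ⁻¹' {g x} := fun η => hdz η
  -- degenerate doubling of a cube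
  have hdeg : ∀ (c0 : (Fin (n + 1) → Bool) → X), c0 ∈ S.cubes (n + 1) →
      concatCube c0 c0 ∈ S.cubes (n + 1 + 1) := by
    intro c0 hc0
    have hmor : (fun (ω : Fin (n + 1 + 1) → Bool) => c0 (fun i => ω i.castSucc))
        ∈ S.cubes (n + 1 + 1) :=
      hS.2.2 (fun ω (i : Fin (n + 1)) => ω i.castSucc)
        (fun i => Or.inr (Or.inr (Or.inl ⟨i.castSucc, fun ω => rfl⟩))) _ hc0
    have hcc : concatCube c0 c0 = fun ω => c0 (fun i => ω i.castSucc) := by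
      funext ω
      simp only [concatCube]
      split <;> rfl
    rw [hcc]; exact hmor
  -- the top face is a face of codimension 1
  have hface : IsFaceOfCodim {ω : Fin (n + 1 + 1) → Bool | ω (Fin.last (n + 1)) = true} 1 := by
    refine ⟨{Fin.last (n + 1)}, fun _ => true, Finset.card_singleton _, ?_⟩
    ext ω; simp
  have htrans := (hu.2.2 (g x)).2 (n + 1 + 1) (by omega) _ hface
  -- applying the translation along the top face
  have hkey : ∀ (c0 : (Fin (n + 1) → Bool) → X), c0 ∈ S.cubes (n + 1) →
      (∀ η, c0 η ∈ g ⁻¹' {g x}) →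
      concatCube c0 (fun η => u (c0 η)) ∈ S.cubes (n + 1 + 1) := by
    intro c0 hc0 hc0f
    have h1 : concatCube c0 c0 ∈ (subFamily S (g ⁻¹' {g x})).cubes (n + 1 + 1) := by
      refine ⟨hdeg c0 hc0, ?_⟩
      intro ω
      simp only [concatCube]
      split <;> exact hc0f _
    have h2 := htrans _ h1
    have h3 : faceModify {ω : Fin (n + 1 + 1) → Bool | ω (Fin.last (n + 1)) = true} u
        (concatCube c0 c0) = concatCube c0 (fun η => u (c0 η)) := by
      funext ω
      simp only [faceModify, concatCube, Set.mem_setOf_eq]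
      by_cases hb : ω (Fin.last (n + 1)) = true
      · rw [if_pos hb, if_pos hb, if_pos hb]
      · rw [if_neg hb, if_neg hb, if_neg hb]
    rw [h3] at h2
    exact h2.1
  have hK : concatCube d (fun η => u (d η)) ∈ S.cubes (n + 1 + 1) := hkey d hdmem hdfib
  have hK0 : concatCube (fun _ => x) (fun η => u ((fun _ : Fin (n + 1) → Bool => x) η))
      ∈ S.cubes (n + 1 + 1) :=
    hkey (fun _ => x) (const_cube_mem hS x _) (fun η => rfl)
  -- push to Y along φ
  have hφK : (fun ω => φ (concatCube d (fun η => u (d η)) ω)) ∈ T.cubes (n + 1 + 1) :=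
    hφ.1.1.2 (n + 1 + 1) _ hK
  have hφK0 : (fun ω => φ (concatCube (fun _ => x)
      (fun η => u ((fun _ : Fin (n + 1) → Bool => x) η)) ω)) ∈ T.cubes (n + 1 + 1) :=
    hφ.1.1.2 (n + 1 + 1) _ hK0
  -- the two images agree off the top vertex
  have hφd : ∀ η, φ (d η) = φ x := by
    intro η
    by_cases hη : η = topVtx (n + 1)
    · simp only [hd]; rw [if_pos hη]; exact hxx'.symm
    · simp only [hd]; rw [if_neg hη]
  have hagree : ∀ ω, ω ≠ topVtx (n + 1 + 1) →
      φ (concatCube (fun _ => x) (fun η => u ((fun _ : Fin (n + 1) → Bool => x) η)) ω)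
        = φ (concatCube d (fun η => u (d η)) ω) := by
    intro ω hω
    simp only [concatCube]
    by_cases hb : ω (Fin.last (n + 1)) = true
    · rw [if_pos hb, if_pos hb]
      have hne : (fun i : Fin (n + 1) => ω i.castSucc) ≠ topVtx (n + 1) := by
        intro hcon
        exact hω (eq_top_of_last_castSucc hb hcon)
      have hdd : d (fun i => ω i.castSucc) = x := by
        simp only [hd]; rw [if_neg hne]
      rw [hdd]
    · rw [if_neg hb, if_neg hb]
      exact (hφd _).symm
  -- the two images have the same h-image
  have himg : (fun ω => h (φ (concatCube (fun _ => x)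
        (fun η => u ((fun _ : Fin (n + 1) → Bool => x) η)) ω)))
      = fun ω => h (φ (concatCube d (fun η => u (d η)) ω)) := by
    funext ω
    rw [← hcomp, ← hcomp]
    simp only [concatCube]
    by_cases hb : ω (Fin.last (n + 1)) = true
    · rw [if_pos hb, if_pos hb, hu.2.1, hu.2.1, hdz]
    · rw [if_neg hb, if_neg hb, hdz]
  -- conclude by (s+1)-uniqueness of h
  have heq := hh.2 _ hφK0 _ hφK hagree himg
  have htopeval := congrFun heq (topVtx (n + 1 + 1))
  simp only [concatCube] at htopeval
  have hlast : topVtx (n + 1 + 1) (Fin.last (n + 1)) = true := rfl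
  rw [if_pos hlast, if_pos hlast] at htopeval
  have hdt : d (fun i : Fin (n + 1) => topVtx (n + 1 + 1) i.castSucc) = x' := by
    have hcond : (fun i : Fin (n + 1) => topVtx (n + 1 + 1) i.castSucc) = topVtx (n + 1) := by
      funext i; rfl
    simp only [hd]
    rw [if_pos hcond]
  rw [hdt] at htopeval
  exact htopeval
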